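/- Fix n ∈ ℕ, m ∈ ℝⁿ, a positive semidefinite matrix Σ ∈ ℝⁿˣⁿ, and α ∈ (0,1). Let 𝒫 be the set of probability measures μ on ℝⁿ with finite second moments, mean ∫ x dμ = m, and covariance ∫ (x − m)(x − m)ᵀ dμ = Σ, and let Z : ℝⁿ → ℝ be a measurable function integrable with respect to every μ ∈ 𝒫. Then the supremum over the ambiguity set and the infimum in the CVaR definition can be interchanged: sup_{μ ∈ 𝒫} inf_{s ∈ ℝ} ( s + α⁻¹ ∫ max(Z − s, 0) dμ ) = inf_{s ∈ ℝ} sup_{μ ∈ 𝒫} ( s + α⁻¹ ∫ max(Z − s, 0) dμ ). -/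

import Mathlib

open MeasureTheory Matrix

/-- The moment-based ambiguity set of probability measures on `ℝⁿ` with finite
second moments, mean `m`, and covariance matrix `S`. -/
def momentSet (n : ℕ) (m : Fin n → ℝ) (S : Matrix (Fin n) (Fin n) ℝ) :
    Set (Measure (Fin n → ℝ)) :=
  {μ | IsProbabilityMeasure μ ∧ Integrable (fun x => ‖x‖ ^ 2) μ ∧
    (∫ x, x ∂μ) = m ∧ ∀ i j, ∫ x, (x i - m i) * (x j - m j) ∂μ = S i j}


variable {X : Type*} [MeasurableSpace X]

noncomputable def cvf (α : ℝ) (Z : X → ℝ) (μ : Measure X) (s : ℝ) : ℝ :=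
  s + α⁻¹ * ∫ x, max (Z x - s) 0 ∂μ

lemma int_pos_part {Z : X → ℝ} {μ : Measure X} [IsFiniteMeasure μ] (hZ : Integrable Z μ) (s : ℝ) :
    Integrable (fun x => max (Z x - s) 0) μ :=
  (hZ.sub (integrable_const s)).pos_part

lemma cvf_lb1 {α : ℝ} (hα : 0 < α) {Z : X → ℝ} {μ : Measure X} (s : ℝ) :
    s ≤ cvf α Z μ s := by
  have h : 0 ≤ ∫ x, max (Z x - s) 0 ∂μ := integral_nonneg fun x => le_max_right _ _
  have : 0 ≤ α⁻¹ * ∫ x, max (Z x - s) 0 ∂μ := mul_nonneg (by positivity) h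
  simp only [cvf]; linarith

lemma cvf_lb2 {α : ℝ} (hα : 0 < α) {Z : X → ℝ} {μ : Measure X} [IsProbabilityMeasure μ]
    (hZ : Integrable Z μ) (s : ℝ) :
    α⁻¹ * (∫ x, Z x ∂μ) + (1 - α⁻¹) * s ≤ cvf α Z μ s := by
  have h1 : (∫ x, Z x ∂μ) - s ≤ ∫ x, max (Z x - s) 0 ∂μ := by
    have : (∫ x, Z x - s ∂μ) ≤ ∫ x, max (Z x - s) 0 ∂μ :=
      integral_mono (hZ.sub (integrable_const s)) (int_pos_part hZ s) fun x => le_max_left _ _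
    rwa [integral_sub hZ (integrable_const s), integral_const, probReal_univ,
      one_smul] at this
  have hαi : 0 < α⁻¹ := by positivity
  have := mul_le_mul_of_nonneg_left h1 hαi.le
  simp only [cvf]; nlinarith
lemma cvf_lip {α : ℝ} (hα : 0 < α) {Z : X → ℝ} {μ : Measure X} [IsProbabilityMeasure μ]
    (hZ : Integrable Z μ) (s t : ℝ) :
    |cvf α Z μ s - cvf α Z μ t| ≤ (1 + α⁻¹) * |s - t| := by
  have key : |(∫ x, max (Z x - s) 0 ∂μ) - ∫ x, max (Z x - t) 0 ∂μ| ≤ |s - t| := by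
    rw [← integral_sub (int_pos_part hZ s) (int_pos_part hZ t)]
    calc |∫ x, (max (Z x - s) 0 - max (Z x - t) 0) ∂μ|
        ≤ ∫ x, |max (Z x - s) 0 - max (Z x - t) 0| ∂μ := by
          simpa using
            norm_integral_le_integral_norm (fun x => max (Z x - s) 0 - max (Z x - t) 0) (μ := μ)
      _ ≤ ∫ (_ : X), |s - t| ∂μ := by
          apply integral_mono ((int_pos_part hZ s).sub (int_pos_part hZ t)).abs
            (integrable_const _)
          intro x
          show |max (Z x - s) 0 - max (Z x - t) 0| ≤ |s - t|
          have h0 : |max (Z x - s) 0 - max (Z x - t) 0| ≤ |(Z x - s) - (Z x - t)| :=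
            abs_max_sub_max_le_abs _ _ _
          have h1 : (Z x - s) - (Z x - t) = t - s := by ring
          rw [h1] at h0
          exact h0.trans_eq (abs_sub_comm t s)
      _ = |s - t| := by rw [integral_const]; simp
  have hαi : 0 < α⁻¹ := by positivity
  simp only [cvf]
  calc |s + α⁻¹ * ∫ x, max (Z x - s) 0 ∂μ - (t + α⁻¹ * ∫ x, max (Z x - t) 0 ∂μ)|
      = |(s - t) + α⁻¹ * ((∫ x, max (Z x - s) 0 ∂μ) - ∫ x, max (Z x - t) 0 ∂μ)| := by
        congr 1; ring
    _ ≤ |s - t| + |α⁻¹ * ((∫ x, max (Z x - s) 0 ∂μ) - ∫ x, max (Z x - t) 0 ∂μ)| := abs_add_le _ _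
    _ ≤ |s - t| + α⁻¹ * |s - t| := by
        rw [abs_mul, abs_of_pos hαi]
        exact add_le_add_right (mul_le_mul_of_nonneg_left key hαi.le) _
    _ = (1 + α⁻¹) * |s - t| := by ring

lemma cvf_cont {α : ℝ} (hα : 0 < α) {Z : X → ℝ} {μ : Measure X} [IsProbabilityMeasure μ]
    (hZ : Integrable Z μ) : Continuous (cvf α Z μ) := by
  have h : LipschitzWith (1 + α⁻¹).toNNReal (cvf α Z μ) := by
    apply LipschitzWith.of_dist_le_mul
    intro s t
    rw [Real.dist_eq, Real.dist_eq, Real.coe_toNNReal _ (by positivity)]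
    exact cvf_lip hα hZ s t
  exact h.continuous

lemma cvf_convex {α : ℝ} (hα : 0 < α) {Z : X → ℝ} {μ : Measure X} [IsProbabilityMeasure μ]
    (hZ : Integrable Z μ) {a b : ℝ} (ha : 0 ≤ a) (hb : 0 ≤ b) (hab : a + b = 1) (s t : ℝ) :
    cvf α Z μ (a * s + b * t) ≤ a * cvf α Z μ s + b * cvf α Z μ t := by
  have key : (∫ x, max (Z x - (a * s + b * t)) 0 ∂μ)
      ≤ a * (∫ x, max (Z x - s) 0 ∂μ) + b * ∫ x, max (Z x - t) 0 ∂μ := by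
    have h1 : (∫ x, max (Z x - (a * s + b * t)) 0 ∂μ)
        ≤ ∫ x, a * max (Z x - s) 0 + b * max (Z x - t) 0 ∂μ := by
      apply integral_mono (int_pos_part hZ _)
        (((int_pos_part hZ s).const_mul a).add ((int_pos_part hZ t).const_mul b))
      intro x
      show max (Z x - (a * s + b * t)) 0 ≤ a * max (Z x - s) 0 + b * max (Z x - t) 0
      have hx : Z x - (a * s + b * t) = a * (Z x - s) + b * (Z x - t) := by linear_combination (-Z x) * hab
      rw [hx]
      apply max_le
      · have h1 := mul_le_mul_of_nonneg_left (le_max_left (Z x - s) 0) ha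
        have h2 := mul_le_mul_of_nonneg_left (le_max_left (Z x - t) 0) hb
        linarith
      · have h1 := mul_nonneg ha (le_max_right (Z x - s) 0)
        have h2 := mul_nonneg hb (le_max_right (Z x - t) 0)
        linarith
    rwa [integral_add ((int_pos_part hZ s).const_mul a) ((int_pos_part hZ t).const_mul b),
      integral_const_mul, integral_const_mul] at h1
  have hαi : (0:ℝ) ≤ α⁻¹ := by positivity
  simp only [cvf]
  nlinarith [mul_le_mul_of_nonneg_left key hαi]
lemma integrable_mix {X : Type*} [MeasurableSpace X] {E : Type*} [NormedAddCommGroup E]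
    {μ ν : Measure X} {g : X → E} (a b : ℝ) (hgμ : Integrable g μ) (hgν : Integrable g ν) :
    Integrable g (ENNReal.ofReal a • μ + ENNReal.ofReal b • ν) :=
  (hgμ.smul_measure (by finiteness)).add_measure (hgν.smul_measure (by finiteness))

lemma integral_mix {X : Type*} [MeasurableSpace X] {E : Type*} [NormedAddCommGroup E]
    [NormedSpace ℝ E] {μ ν : Measure X} {g : X → E} {a b : ℝ} (ha : 0 ≤ a) (hb : 0 ≤ b)
    (hgμ : Integrable g μ) (hgν : Integrable g ν) :
    ∫ x, g x ∂(ENNReal.ofReal a • μ + ENNReal.ofReal b • ν)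
      = a • (∫ x, g x ∂μ) + b • ∫ x, g x ∂ν := by
  rw [integral_add_measure (hgμ.smul_measure (by finiteness)) (hgν.smul_measure (by finiteness)),
    integral_smul_measure, integral_smul_measure, ENNReal.toReal_ofReal ha,
    ENNReal.toReal_ofReal hb]

variable {n : ℕ} {m : Fin n → ℝ} {S : Matrix (Fin n) (Fin n) ℝ}

lemma mem_integrable_id {μ : Measure (Fin n → ℝ)} (hμ : μ ∈ momentSet n m S) :
    Integrable (fun x : Fin n → ℝ => x) μ := by
  haveI := hμ.1
  apply ((integrable_const (1:ℝ)).add hμ.2.1).mono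
    measurable_id.aestronglyMeasurable
  filter_upwards with x
  simp only [Pi.add_apply, id_eq]
  have h1 : ‖(1:ℝ) + ‖x‖^2‖ = 1 + ‖x‖^2 := by
    rw [Real.norm_eq_abs, abs_of_nonneg (by positivity)]
  rw [h1]
  nlinarith [norm_nonneg x]

lemma mem_integrable_cov {μ : Measure (Fin n → ℝ)} (hμ : μ ∈ momentSet n m S) (i j : Fin n) :
    Integrable (fun x : Fin n → ℝ => (x i - m i) * (x j - m j)) μ := by
  haveI := hμ.1
  have hmeas : AEStronglyMeasurable (fun x : Fin n → ℝ => (x i - m i) * (x j - m j)) μ := by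
    apply Continuous.aestronglyMeasurable
    continuity
  apply (((hμ.2.1.const_mul 2).add (integrable_const (2 * ‖m‖^2)))).mono hmeas
  filter_upwards with x
  simp only [Pi.add_apply]
  have hi : |x i - m i| ≤ ‖x‖ + ‖m‖ := by
    have h1 := norm_le_pi_norm x i
    have h2 := norm_le_pi_norm m i
    simp only [Real.norm_eq_abs] at h1 h2
    calc |x i - m i| ≤ |x i| + |m i| := abs_sub _ _
      _ ≤ ‖x‖ + ‖m‖ := add_le_add h1 h2
  have hj : |x j - m j| ≤ ‖x‖ + ‖m‖ := by
    have h1 := norm_le_pi_norm x j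
    have h2 := norm_le_pi_norm m j
    simp only [Real.norm_eq_abs] at h1 h2
    calc |x j - m j| ≤ |x j| + |m j| := abs_sub _ _
      _ ≤ ‖x‖ + ‖m‖ := add_le_add h1 h2
  have hrhs : ‖2 * ‖x‖^2 + 2 * ‖m‖^2‖ = 2 * ‖x‖^2 + 2 * ‖m‖^2 := by
    rw [Real.norm_eq_abs, abs_of_nonneg (by positivity)]
  rw [Real.norm_eq_abs, hrhs, abs_mul]
  have hprod : |x i - m i| * |x j - m j| ≤ (‖x‖ + ‖m‖) * (‖x‖ + ‖m‖) :=
    mul_le_mul hi hj (abs_nonneg _) (by positivity)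
  nlinarith [sq_nonneg (‖x‖ - ‖m‖)]

lemma mix_mem {μ ν : Measure (Fin n → ℝ)} (hμ : μ ∈ momentSet n m S)
    (hν : ν ∈ momentSet n m S) {t : ℝ} (h0 : 0 ≤ t) (h1 : t ≤ 1) :
    (ENNReal.ofReal (1 - t) • μ + ENNReal.ofReal t • ν) ∈ momentSet n m S := by
  haveI := hμ.1; haveI := hν.1
  refine ⟨⟨?_⟩, ?_, ?_, ?_⟩
  · simp only [Measure.add_apply, Measure.smul_apply, measure_univ, smul_eq_mul, mul_one]
    rw [← ENNReal.ofReal_add (by linarith) h0]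
    norm_num
  · exact integrable_mix _ _ hμ.2.1 hν.2.1
  · rw [integral_mix (by linarith) h0 (mem_integrable_id hμ) (mem_integrable_id hν),
      hμ.2.2.1, hν.2.2.1, ← add_smul]
    norm_num
  · intro i j
    rw [integral_mix (by linarith) h0 (mem_integrable_cov hμ i j) (mem_integrable_cov hν i j),
      hμ.2.2.2 i j, hν.2.2.2 i j, smul_eq_mul, smul_eq_mul]
    ring

lemma cvf_mix {α : ℝ} {Z : (Fin n → ℝ) → ℝ} {μ ν : Measure (Fin n → ℝ)}
    [IsProbabilityMeasure μ] [IsProbabilityMeasure ν]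
    (hZμ : Integrable Z μ) (hZν : Integrable Z ν) {t : ℝ} (h0 : 0 ≤ t) (h1 : t ≤ 1) (s : ℝ) :
    cvf α Z (ENNReal.ofReal (1 - t) • μ + ENNReal.ofReal t • ν) s
      = (1 - t) * cvf α Z μ s + t * cvf α Z ν s := by
  simp only [cvf]
  rw [integral_mix (by linarith) h0 (int_pos_part hZμ s) (int_pos_part hZν s)]
  simp only [smul_eq_mul]
  ring
lemma combo_max {g : ℝ → ℝ}
    (hg : ∀ a b s t : ℝ, 0 ≤ a → 0 ≤ b → a + b = 1 → g (a*s+b*t) ≤ a * g s + b * g t)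
    {s1 s2 c : ℝ} (hc1 : s1 ≤ c) (hc2 : c ≤ s2) : g c ≤ max (g s1) (g s2) := by
  rcases eq_or_lt_of_le (hc1.trans hc2) with heq | hlt
  · have : c = s1 := le_antisymm (by rw [heq]; exact hc2) hc1
    subst this
    exact le_max_left _ _
  · set a := (s2 - c)/(s2 - s1) with ha_def
    set b := (c - s1)/(s2 - s1) with hb_def
    have hden : 0 < s2 - s1 := by linarith
    have ha : 0 ≤ a := div_nonneg (by linarith) hden.le
    have hb : 0 ≤ b := div_nonneg (by linarith) hden.le
    have hab : a + b = 1 := by rw [ha_def, hb_def]; field_simp; ring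
    have hc : a * s1 + b * s2 = c := by rw [ha_def, hb_def]; field_simp; ring
    calc g c = g (a * s1 + b * s2) := by rw [hc]
      _ ≤ a * g s1 + b * g s2 := hg a b s1 s2 ha hb hab
      _ ≤ a * max (g s1) (g s2) + b * max (g s1) (g s2) := by
          gcongr <;> [exact le_max_left _ _; exact le_max_right _ _]
      _ = max (g s1) (g s2) := by rw [← add_mul, hab, one_mul]

lemma combo_gt {a b x y θ : ℝ} (ha : 0 ≤ a) (hb : 0 ≤ b) (hab : a + b = 1)
    (hx : θ < x) (hy : θ < y) : θ < a * x + b * y := by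
  have hθ : θ = a*θ + b*θ := by rw [← add_mul, hab, one_mul]
  rcases ha.lt_or_eq with ha' | ha'
  · have h1 : a*θ < a*x := mul_lt_mul_of_pos_left hx ha'
    have h2 : b*θ ≤ b*y := mul_le_mul_of_nonneg_left hy.le hb
    linarith
  · have hb' : 0 < b := by linarith
    have h1 : a*θ ≤ a*x := mul_le_mul_of_nonneg_left hx.le ha
    have h2 : b*θ < b*y := mul_lt_mul_of_pos_left hy hb'
    linarith

section Tfacts

variable {n : ℕ} {m : Fin n → ℝ} {S : Matrix (Fin n) (Fin n) ℝ} {α : ℝ}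
  {Z : (Fin n → ℝ) → ℝ} {θ : ℝ} {μ : Measure (Fin n → ℝ)}

lemma T_le_theta (hα : 0 < α) {s : ℝ} (hs : cvf α Z μ s ≤ θ) : s ≤ θ :=
  (cvf_lb1 hα s).trans hs

lemma T_bddAbove (hα : 0 < α) : BddAbove {s | cvf α Z μ s ≤ θ} :=
  ⟨θ, fun _ hs => T_le_theta hα hs⟩

lemma T_lb (hα : α ∈ Set.Ioo (0:ℝ) 1) [IsProbabilityMeasure μ] (hZ : Integrable Z μ)
    {s : ℝ} (hs : cvf α Z μ s ≤ θ) :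
    (α⁻¹ * (∫ x, Z x ∂μ) - θ) / (α⁻¹ - 1) ≤ s := by
  have hai : 1 < α⁻¹ := (one_lt_inv_iff₀).mpr ⟨hα.1, hα.2⟩
  rw [div_le_iff₀ (by linarith)]
  have := cvf_lb2 hα.1 hZ s
  nlinarith

lemma T_bddBelow (hα : α ∈ Set.Ioo (0:ℝ) 1) [IsProbabilityMeasure μ]
    (hZ : Integrable Z μ) : BddBelow {s | cvf α Z μ s ≤ θ} :=
  ⟨_, fun _ hs => T_lb hα hZ hs⟩

lemma T_closed (hα : 0 < α) [IsProbabilityMeasure μ] (hZ : Integrable Z μ) :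
    IsClosed {s | cvf α Z μ s ≤ θ} :=
  isClosed_le (cvf_cont hα hZ) continuous_const

lemma T_convex (hα : 0 < α) [IsProbabilityMeasure μ] (hZ : Integrable Z μ) :
    Convex ℝ {s | cvf α Z μ s ≤ θ} := by
  intro s1 hs1 s2 hs2 a b ha hb hab
  simp only [Set.mem_setOf_eq, smul_eq_mul] at *
  calc cvf α Z μ (a * s1 + b * s2) ≤ a * cvf α Z μ s1 + b * cvf α Z μ s2 :=
        cvf_convex hα hZ ha hb hab s1 s2
    _ ≤ a * θ + b * θ := by gcongr
    _ = θ := by rw [← add_mul, hab, one_mul]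

lemma T_eq_Icc (hα : α ∈ Set.Ioo (0:ℝ) 1) [IsProbabilityMeasure μ] (hZ : Integrable Z μ)
    (hne : {s | cvf α Z μ s ≤ θ}.Nonempty) :
    {s | cvf α Z μ s ≤ θ}
      = Set.Icc (sInf {s | cvf α Z μ s ≤ θ}) (sSup {s | cvf α Z μ s ≤ θ}) := by
  apply le_antisymm
  · intro s hs
    exact ⟨csInf_le (T_bddBelow hα hZ) hs, le_csSup (T_bddAbove hα.1) hs⟩
  · have hinf : sInf {s | cvf α Z μ s ≤ θ} ∈ {s | cvf α Z μ s ≤ θ} :=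
      (T_closed hα.1 hZ).csInf_mem hne (T_bddBelow hα hZ)
    have hsup : sSup {s | cvf α Z μ s ≤ θ} ∈ {s | cvf α Z μ s ≤ θ} :=
      (T_closed hα.1 hZ).csSup_mem hne (T_bddAbove hα.1)
    exact ((T_convex hα.1 hZ).ordConnected).out hinf hsup

end Tfacts
/-- Affine mixture of two functions. -/
noncomputable def affmix (f1 f2 : ℝ → ℝ) (t s : ℝ) : ℝ := (1 - t) * f1 s + t * f2 s

lemma interval_minimax (f1 f2 : ℝ → ℝ) (θ c C β Kc : ℝ) (hβ : β < 0) (hKc : 0 ≤ Kc)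
    (hcomb1 : ∀ a b s t : ℝ, 0 ≤ a → 0 ≤ b → a + b = 1 → f1 (a*s+b*t) ≤ a * f1 s + b * f1 t)
    (hcomb2 : ∀ a b s t : ℝ, 0 ≤ a → 0 ≤ b → a + b = 1 → f2 (a*s+b*t) ≤ a * f2 s + b * f2 t)
    (hlb1 : ∀ s, s ≤ f1 s) (hlb1' : ∀ s, s ≤ f2 s)
    (hco1 : ∀ s, C + β * s ≤ f1 s) (hco2 : ∀ s, C + β * s ≤ f2 s)
    (hlip1 : ∀ s s', |f1 s - f1 s'| ≤ Kc * |s - s'|)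
    (hlip2 : ∀ s s', |f2 s - f2 s'| ≤ Kc * |s - s'|)
    (h1p : ∀ s, c ≤ s → θ < f1 s) (h2p : ∀ s, s ≤ c → θ < f2 s)
    (hmix : ∀ t, 0 ≤ t → t ≤ 1 → ∃ s, (1 - t) * f1 s + t * f2 s < θ) : False := by
  have hcont1 : Continuous f1 := by
    have : LipschitzWith Kc.toNNReal f1 := by
      apply LipschitzWith.of_dist_le_mul
      intro s s'
      rw [Real.dist_eq, Real.dist_eq, Real.coe_toNNReal _ hKc]
      exact hlip1 s s'
    exact this.continuous
  have hcont2 : Continuous f2 := by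
    have : LipschitzWith Kc.toNNReal f2 := by
      apply LipschitzWith.of_dist_le_mul
      intro s s'
      rw [Real.dist_eq, Real.dist_eq, Real.coe_toNNReal _ hKc]
      exact hlip2 s s'
    exact this.continuous
  have hφcont : ∀ t, Continuous (affmix f1 f2 t) := fun t =>
    (continuous_const.mul hcont1).add (continuous_const.mul hcont2)
  have hφconv : ∀ t, 0 ≤ t → t ≤ 1 → ∀ a b s s' : ℝ, 0 ≤ a → 0 ≤ b → a + b = 1 →
      affmix f1 f2 t (a*s+b*s') ≤ a * affmix f1 f2 t s + b * affmix f1 f2 t s' := by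
    intro t ht0 ht1 a b s s' ha hb hab
    have c1 := hcomb1 a b s s' ha hb hab
    have c2 := hcomb2 a b s s' ha hb hab
    have d1 := mul_le_mul_of_nonneg_left c1 (by linarith : (0:ℝ) ≤ 1 - t)
    have d2 := mul_le_mul_of_nonneg_left c2 ht0
    simp only [affmix]
    nlinarith [d1, d2]
  have hφ_lb1 : ∀ t s, 0 ≤ t → t ≤ 1 → s ≤ affmix f1 f2 t s := by
    intro t s ht0 ht1
    have d1 := mul_le_mul_of_nonneg_left (hlb1 s) (by linarith : (0:ℝ) ≤ 1 - t)
    have d2 := mul_le_mul_of_nonneg_left (hlb1' s) ht0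
    simp only [affmix]
    nlinarith [d1, d2]
  have hφ_lb2 : ∀ t s, 0 ≤ t → t ≤ 1 → C + β * s ≤ affmix f1 f2 t s := by
    intro t s ht0 ht1
    have d1 := mul_le_mul_of_nonneg_left (hco1 s) (by linarith : (0:ℝ) ≤ 1 - t)
    have d2 := mul_le_mul_of_nonneg_left (hco2 s) ht0
    simp only [affmix]
    nlinarith [d1, d2]
  set Mc : ℝ := max (f1 c) (f2 c) with hMc_def
  have hφ_le_Mc : ∀ t, 0 ≤ t → t ≤ 1 → affmix f1 f2 t c ≤ Mc := by
    intro t ht0 ht1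
    have d1 := mul_le_mul_of_nonneg_left (le_max_left (f1 c) (f2 c))
      (by linarith : (0:ℝ) ≤ 1 - t)
    have d2 := mul_le_mul_of_nonneg_left (le_max_right (f1 c) (f2 c)) ht0
    simp only [affmix]
    nlinarith [d1, d2]
  have hφc_gt : ∀ t, 0 ≤ t → t ≤ 1 → θ < affmix f1 f2 t c := by
    intro t ht0 ht1
    have := combo_gt (by linarith : (0:ℝ) ≤ 1 - t) ht0 (by ring)
      (h1p c le_rfl) (h2p c le_rfl)
    simpa [affmix] using this
  set L : ℝ := min c ((Mc - C)/β) with hL_def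
  have hLc : L ≤ c := min_le_left _ _
  have hLbound : ∀ t s, 0 ≤ t → t ≤ 1 → s ≤ L → Mc ≤ affmix f1 f2 t s := by
    intro t s ht0 ht1 hsL
    have h := hφ_lb2 t s ht0 ht1
    have hL2 : L ≤ (Mc - C)/β := min_le_right _ _
    have hβL : Mc - C ≤ β * L := by
      rw [le_div_iff_of_neg hβ] at hL2
      linarith [hL2]
    have hβs : β * L ≤ β * s := by
      exact mul_le_mul_of_nonpos_left hsL hβ.le
    linarith
  set B : ℝ := max c θ + 1 with hB_def
  have hcB : c ≤ B := by rw [hB_def]; linarith [le_max_left c θ]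
  have hBθ : θ + 1 ≤ B := by rw [hB_def]; linarith [le_max_right c θ]
  have himg_ne : ∀ (t u v : ℝ), u ≤ v → (affmix f1 f2 t '' Set.Icc u v).Nonempty :=
    fun t u v huv => ⟨affmix f1 f2 t u, Set.mem_image_of_mem _ (Set.left_mem_Icc.mpr huv)⟩
  have himg_bdd : ∀ (t u v : ℝ), BddBelow (affmix f1 f2 t '' Set.Icc u v) :=
    fun t u v => ((isCompact_Icc).image (hφcont t)).bddBelow
  set K : ℝ := |f1 c| + |f2 c| + 2*Kc*(|L| + |B| + |c|) with hK_def
  have hK0 : 0 ≤ K := by rw [hK_def]; positivity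
  have habs : ∀ s, L ≤ s → s ≤ B → |f2 s - f1 s| ≤ K := by
    intro s hLs hsB
    have hL0 : (0:ℝ) ≤ |L| := abs_nonneg L
    have hB0 : (0:ℝ) ≤ |B| := abs_nonneg B
    have hc0 : (0:ℝ) ≤ |c| := abs_nonneg c
    have hsc : |s - c| ≤ |L| + |B| + |c| := by
      have h1 : s ≤ |B| := hsB.trans (le_abs_self B)
      have h2 : -|L| ≤ s := (neg_abs_le L).trans hLs
      have h3 : -|c| ≤ c := neg_abs_le c
      have h4 : c ≤ |c| := le_abs_self c
      rw [abs_le]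
      constructor <;> linarith
    have lip1 := hlip1 c s
    have lip2 := hlip2 s c
    have m1 : Kc * |s - c| ≤ Kc * (|L| + |B| + |c|) := mul_le_mul_of_nonneg_left hsc hKc
    have w1 : |f1 c - f1 s| ≤ Kc * |s - c| := by rw [abs_sub_comm s c]; exact lip1
    have w3 : |f2 c - f1 c| ≤ |f2 c| + |f1 c| := abs_sub _ _
    calc |f2 s - f1 s| = |(f2 s - f2 c) + (f2 c - f1 c) + (f1 c - f1 s)| := by congr 1; ring
      _ ≤ |(f2 s - f2 c) + (f2 c - f1 c)| + |f1 c - f1 s| := abs_add_le _ _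
      _ ≤ |f2 s - f2 c| + |f2 c - f1 c| + |f1 c - f1 s| := by
          linarith [abs_add_le (f2 s - f2 c) (f2 c - f1 c)]
      _ ≤ K := by rw [hK_def]; linarith
  have hlip : ∀ (u v : ℝ), u ≤ v → L ≤ u → v ≤ B → ∀ t t' : ℝ,
      sInf (affmix f1 f2 t '' Set.Icc u v)
        ≤ sInf (affmix f1 f2 t' '' Set.Icc u v) + K * |t - t'| := by
    intro u v huv hLu hvB t t'
    have key : sInf (affmix f1 f2 t '' Set.Icc u v) - K * |t - t'|
        ≤ sInf (affmix f1 f2 t' '' Set.Icc u v) := by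
      apply le_csInf (himg_ne t' u v huv)
      rintro y ⟨s, hs, rfl⟩
      have h1 : sInf (affmix f1 f2 t '' Set.Icc u v) ≤ affmix f1 f2 t s :=
        csInf_le (himg_bdd t u v) (Set.mem_image_of_mem _ hs)
      have h2 : |affmix f1 f2 t s - affmix f1 f2 t' s| ≤ K * |t - t'| := by
        have heq : affmix f1 f2 t s - affmix f1 f2 t' s = (t - t') * (f2 s - f1 s) := by
          simp only [affmix]; ring
        rw [heq, abs_mul, mul_comm]
        exact mul_le_mul_of_nonneg_right (habs s (hLu.trans hs.1) (hs.2.trans hvB))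
          (abs_nonneg _)
      have h3 := abs_le.mp h2
      linarith [h3.1, h3.2]
    linarith
  have hψcont : Continuous (fun t => sInf (affmix f1 f2 t '' Set.Icc L c)) := by
    have : LipschitzWith K.toNNReal (fun t => sInf (affmix f1 f2 t '' Set.Icc L c)) := by
      apply LipschitzWith.of_dist_le_mul
      intro t t'
      rw [Real.dist_eq, Real.dist_eq, Real.coe_toNNReal _ hK0, abs_le]
      have u1 := hlip L c hLc le_rfl hcB t t'
      have u2 := hlip L c hLc le_rfl hcB t' t
      rw [abs_sub_comm t' t] at u2
      constructor <;> [linarith; linarith]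
    exact this.continuous
  have hχcont : Continuous (fun t => sInf (affmix f1 f2 t '' Set.Icc c B)) := by
    have : LipschitzWith K.toNNReal (fun t => sInf (affmix f1 f2 t '' Set.Icc c B)) := by
      apply LipschitzWith.of_dist_le_mul
      intro t t'
      rw [Real.dist_eq, Real.dist_eq, Real.coe_toNNReal _ hK0, abs_le]
      have u1 := hlip c B hcB hLc le_rfl t t'
      have u2 := hlip c B hcB hLc le_rfl t' t
      rw [abs_sub_comm t' t] at u2
      constructor <;> [linarith; linarith]
    exact this.continuous
  have hψ_le : ∀ t s, L ≤ s → s ≤ c →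
      sInf (affmix f1 f2 t '' Set.Icc L c) ≤ affmix f1 f2 t s := fun t s h1' h2' =>
    csInf_le (himg_bdd t L c) (Set.mem_image_of_mem _ ⟨h1', h2'⟩)
  have hχ_le : ∀ t s, c ≤ s → s ≤ B →
      sInf (affmix f1 f2 t '' Set.Icc c B) ≤ affmix f1 f2 t s := fun t s h1' h2' =>
    csInf_le (himg_bdd t c B) (Set.mem_image_of_mem _ ⟨h1', h2'⟩)
  -- cover fact
  have hcover : ∀ t, 0 ≤ t → t ≤ 1 → sInf (affmix f1 f2 t '' Set.Icc L c) ≤ θ →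
      sInf (affmix f1 f2 t '' Set.Icc c B) ≤ θ → False := by
    intro t ht0 ht1 hψt hχt
    have hφc := hφc_gt t ht0 ht1
    have hεpos : (0:ℝ) < (affmix f1 f2 t c - θ)/2 := by linarith
    obtain ⟨y1, hy1, hy1lt⟩ := exists_lt_of_csInf_lt (himg_ne t L c hLc)
      (show sInf (affmix f1 f2 t '' Set.Icc L c) < θ + (affmix f1 f2 t c - θ)/2 by linarith)
    obtain ⟨y2, hy2, hy2lt⟩ := exists_lt_of_csInf_lt (himg_ne t c B hcB)
      (show sInf (affmix f1 f2 t '' Set.Icc c B) < θ + (affmix f1 f2 t c - θ)/2 by linarith)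
    obtain ⟨s1, hs1, rfl⟩ := hy1
    obtain ⟨s2, hs2, rfl⟩ := hy2
    have hmax := combo_max (g := affmix f1 f2 t) (hφconv t ht0 ht1) hs1.2 hs2.1
    have : affmix f1 f2 t c < θ + (affmix f1 f2 t c - θ)/2 :=
      lt_of_le_of_lt hmax (max_lt hy1lt hy2lt)
    linarith
  -- disjointness fact
  have hdisj : ∀ t, 0 ≤ t → t ≤ 1 → θ < sInf (affmix f1 f2 t '' Set.Icc L c) →
      θ < sInf (affmix f1 f2 t '' Set.Icc c B) → False := by
    intro t ht0 ht1 hψt hχt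
    obtain ⟨s, hs⟩ := hmix t ht0 ht1
    have hs' : affmix f1 f2 t s < θ := by simpa [affmix] using hs
    rcases le_total s c with hsc | hcs
    · rcases le_total L s with hLs | hsL
      · have := hψ_le t s hLs hsc
        linarith
      · have hb := hLbound t s ht0 ht1 hsL
        have hψc := hψ_le t c hLc le_rfl
        have := hφ_le_Mc t ht0 ht1
        linarith
    · rcases le_total s B with hsB | hBs
      · have := hχ_le t s hcs hsB
        linarith
      · have := hφ_lb1 t s ht0 ht1
        linarith
  -- endpoints
  have h0V : θ < sInf (affmix f1 f2 0 '' Set.Icc c B) := by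
    have himg : affmix f1 f2 0 '' Set.Icc c B = f1 '' Set.Icc c B := by
      apply Set.image_congr
      intro s _
      simp [affmix]
    obtain ⟨s0, hs0mem, hs0min⟩ := isCompact_Icc.exists_isMinOn
      (Set.nonempty_Icc.mpr hcB) hcont1.continuousOn
    have heq : sInf (f1 '' Set.Icc c B) = f1 s0 := by
      apply le_antisymm
      · exact csInf_le ((isCompact_Icc.image hcont1).bddBelow)
          (Set.mem_image_of_mem _ hs0mem)
      · apply le_csInf ⟨f1 s0, Set.mem_image_of_mem _ hs0mem⟩
        rintro y ⟨s, hs, rfl⟩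
        exact hs0min hs
    rw [himg, heq]
    exact h1p s0 hs0mem.1
  have h1U : θ < sInf (affmix f1 f2 1 '' Set.Icc L c) := by
    have himg : affmix f1 f2 1 '' Set.Icc L c = f2 '' Set.Icc L c := by
      apply Set.image_congr
      intro s _
      simp [affmix]
    obtain ⟨s0, hs0mem, hs0min⟩ := isCompact_Icc.exists_isMinOn
      (Set.nonempty_Icc.mpr hLc) hcont2.continuousOn
    have heq : sInf (f2 '' Set.Icc L c) = f2 s0 := by
      apply le_antisymm
      · exact csInf_le ((isCompact_Icc.image hcont2).bddBelow)
          (Set.mem_image_of_mem _ hs0mem)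
      · apply le_csInf ⟨f2 s0, Set.mem_image_of_mem _ hs0mem⟩
        rintro y ⟨s, hs, rfl⟩
        exact hs0min hs
    rw [himg, heq]
    exact h2p s0 hs0mem.2
  -- connectedness contradiction
  have hpc := isPreconnected_Icc (a := (0:ℝ)) (b := 1)
  obtain ⟨t, htIcc, htU, htV⟩ := hpc
    ((fun t => sInf (affmix f1 f2 t '' Set.Icc L c)) ⁻¹' Set.Ioi θ)
    ((fun t => sInf (affmix f1 f2 t '' Set.Icc c B)) ⁻¹' Set.Ioi θ)
    (isOpen_Ioi.preimage hψcont) (isOpen_Ioi.preimage hχcont)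
    (by
      intro t ht
      rcases le_or_gt (sInf (affmix f1 f2 t '' Set.Icc L c)) θ with h | h
      · right
        rcases le_or_gt (sInf (affmix f1 f2 t '' Set.Icc c B)) θ with h' | h'
        · exact absurd (hcover t ht.1 ht.2 h h') not_false
        · exact h'
      · left; exact h)
    ⟨1, Set.right_mem_Icc.mpr zero_le_one, h1U⟩
    ⟨0, Set.left_mem_Icc.mpr zero_le_one, h0V⟩
  exact hdisj t htIcc.1 htIcc.2 htU htV
lemma core_disjoint {n : ℕ} {m : Fin n → ℝ} {S : Matrix (Fin n) (Fin n) ℝ} {α : ℝ}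
    (hα : α ∈ Set.Ioo (0:ℝ) 1) {Z : (Fin n → ℝ) → ℝ}
    (hZint : ∀ μ ∈ momentSet n m S, Integrable Z μ)
    {θ : ℝ} (hall : ∀ μ ∈ momentSet n m S, ∃ s, cvf α Z μ s < θ)
    {μ1 μ2 : Measure (Fin n → ℝ)} (h1 : μ1 ∈ momentSet n m S) (h2 : μ2 ∈ momentSet n m S)
    (hsep : sSup {s | cvf α Z μ1 s ≤ θ} < sInf {s | cvf α Z μ2 s ≤ θ}) : False := by
  haveI := h1.1; haveI := h2.1
  have hα0 : 0 < α := hα.1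
  have hai : 1 < α⁻¹ := one_lt_inv_iff₀.mpr ⟨hα.1, hα.2⟩
  have hαinn : (0:ℝ) ≤ α⁻¹ := by positivity
  have hZ1 := hZint μ1 h1
  have hZ2 := hZint μ2 h2
  set c := (sSup {s | cvf α Z μ1 s ≤ θ} + sInf {s | cvf α Z μ2 s ≤ θ})/2 with hc
  have hb1c : sSup {s | cvf α Z μ1 s ≤ θ} < c := by rw [hc]; linarith
  have hca2 : c < sInf {s | cvf α Z μ2 s ≤ θ} := by rw [hc]; linarith
  set e := min (∫ x, Z x ∂μ1) (∫ x, Z x ∂μ2) with he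
  apply interval_minimax (cvf α Z μ1) (cvf α Z μ2) θ c (α⁻¹ * e) (1 - α⁻¹) (1 + α⁻¹)
    (by linarith) (by positivity)
  · exact fun a b s t ha hb hab => cvf_convex hα0 hZ1 ha hb hab s t
  · exact fun a b s t ha hb hab => cvf_convex hα0 hZ2 ha hb hab s t
  · exact cvf_lb1 hα0
  · exact cvf_lb1 hα0
  · intro s
    have hl := cvf_lb2 hα0 hZ1 s
    have he1 : α⁻¹ * e ≤ α⁻¹ * ∫ x, Z x ∂μ1 :=
      mul_le_mul_of_nonneg_left (min_le_left _ _) hαinn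
    linarith
  · intro s
    have hl := cvf_lb2 hα0 hZ2 s
    have he2 : α⁻¹ * e ≤ α⁻¹ * ∫ x, Z x ∂μ2 :=
      mul_le_mul_of_nonneg_left (min_le_right _ _) hαinn
    linarith
  · exact cvf_lip hα0 hZ1
  · exact cvf_lip hα0 hZ2
  · intro s hs
    by_contra h
    push_neg at h
    have : s ≤ sSup {s | cvf α Z μ1 s ≤ θ} := le_csSup (T_bddAbove hα0) h
    linarith
  · intro s hs
    by_contra h
    push_neg at h
    have : sInf {s | cvf α Z μ2 s ≤ θ} ≤ s := csInf_le (T_bddBelow hα hZ2) h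
    linarith
  · intro t ht0 ht1
    obtain ⟨s, hs⟩ := hall _ (mix_mem h1 h2 ht0 ht1)
    rw [cvf_mix hZ1 hZ2 ht0 ht1 s] at hs
    exact ⟨s, hs⟩

lemma core {n : ℕ} {m : Fin n → ℝ} {S : Matrix (Fin n) (Fin n) ℝ} {α : ℝ}
    (hα : α ∈ Set.Ioo (0:ℝ) 1) {Z : (Fin n → ℝ) → ℝ}
    (hZint : ∀ μ ∈ momentSet n m S, Integrable Z μ)
    {θ : ℝ} (hall : ∀ μ ∈ momentSet n m S, ∃ s, cvf α Z μ s < θ)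
    (hne : (momentSet n m S).Nonempty) :
    ∃ s, ∀ μ ∈ momentSet n m S, cvf α Z μ s ≤ θ := by
  obtain ⟨μ0, hμ0⟩ := hne
  have hα0 : 0 < α := hα.1
  by_cases hpair : ∀ μ ∈ momentSet n m S, ∀ ν ∈ momentSet n m S,
      ({s | cvf α Z μ s ≤ θ} ∩ {s | cvf α Z ν s ≤ θ}).Nonempty
  · haveI : Nonempty ↥(momentSet n m S) := ⟨⟨μ0, hμ0⟩⟩
    have hbdd : BddAbove (Set.range fun μ : momentSet n m S =>
        sInf {s | cvf α Z μ.1 s ≤ θ}) := by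
      refine ⟨sSup {s | cvf α Z μ0 s ≤ θ}, ?_⟩
      rintro y ⟨μ, rfl⟩
      obtain ⟨x, hx1, hx2⟩ := hpair μ.1 μ.2 μ0 hμ0
      haveI := μ.2.1
      exact (csInf_le (T_bddBelow hα (hZint μ.1 μ.2)) hx1).trans
        (le_csSup (T_bddAbove hα0) hx2)
    refine ⟨⨆ μ : momentSet n m S, sInf {s | cvf α Z μ.1 s ≤ θ}, ?_⟩
    intro ν hν
    haveI := hν.1
    have hνne : {s | cvf α Z ν s ≤ θ}.Nonempty := by
      obtain ⟨s, hs⟩ := hall ν hν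
      exact ⟨s, hs.le⟩
    have hmem : (⨆ μ : momentSet n m S, sInf {s | cvf α Z μ.1 s ≤ θ})
        ∈ {s | cvf α Z ν s ≤ θ} := by
      rw [T_eq_Icc hα (hZint ν hν) hνne]
      constructor
      · exact le_ciSup hbdd ⟨ν, hν⟩
      · apply ciSup_le
        intro μ
        obtain ⟨x, hx1, hx2⟩ := hpair μ.1 μ.2 ν hν
        haveI := μ.2.1
        exact (csInf_le (T_bddBelow hα (hZint μ.1 μ.2)) hx1).trans
          (le_csSup (T_bddAbove hα0) hx2)
    exact hmem
  · push_neg at hpair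
    obtain ⟨μ1, h1, μ2, h2, hcap⟩ := hpair
    haveI := h1.1; haveI := h2.1
    have hne1 : {s | cvf α Z μ1 s ≤ θ}.Nonempty := by
      obtain ⟨s, hs⟩ := hall μ1 h1; exact ⟨s, hs.le⟩
    have hne2 : {s | cvf α Z μ2 s ≤ θ}.Nonempty := by
      obtain ⟨s, hs⟩ := hall μ2 h2; exact ⟨s, hs.le⟩
    have hd : sSup {s | cvf α Z μ1 s ≤ θ} < sInf {s | cvf α Z μ2 s ≤ θ}
        ∨ sSup {s | cvf α Z μ2 s ≤ θ} < sInf {s | cvf α Z μ1 s ≤ θ} := by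
      by_contra hcon
      push_neg at hcon
      obtain ⟨hc1, hc2⟩ := hcon
      set x := max (sInf {s | cvf α Z μ1 s ≤ θ}) (sInf {s | cvf α Z μ2 s ≤ θ}) with hx
      have hI1 : sInf {s | cvf α Z μ1 s ≤ θ} ≤ sSup {s | cvf α Z μ1 s ≤ θ} := by
        obtain ⟨s, hs⟩ := hne1
        exact (csInf_le (T_bddBelow hα (hZint μ1 h1)) hs).trans (le_csSup (T_bddAbove hα0) hs)
      have hI2 : sInf {s | cvf α Z μ2 s ≤ θ} ≤ sSup {s | cvf α Z μ2 s ≤ θ} := by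
        obtain ⟨s, hs⟩ := hne2
        exact (csInf_le (T_bddBelow hα (hZint μ2 h2)) hs).trans (le_csSup (T_bddAbove hα0) hs)
      have hx1 : x ∈ {s | cvf α Z μ1 s ≤ θ} := by
        rw [T_eq_Icc hα (hZint μ1 h1) hne1]
        exact ⟨le_max_left _ _, max_le hI1 hc1⟩
      have hx2 : x ∈ {s | cvf α Z μ2 s ≤ θ} := by
        rw [T_eq_Icc hα (hZint μ2 h2) hne2]
        exact ⟨le_max_right _ _, max_le hc2 hI2⟩
      have : x ∈ {s | cvf α Z μ1 s ≤ θ} ∩ {s | cvf α Z μ2 s ≤ θ} := ⟨hx1, hx2⟩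
      rw [hcap] at this
      exact this
    rcases hd with hd | hd
    · exact (core_disjoint hα hZint hall h1 h2 hd).elim
    · exact (core_disjoint hα hZint hall h2 h1 hd).elim

/-- Stochastic saddle point property (Shapiro–Kleywegt): for the worst-case
CVaR over a moment-based ambiguity set, the supremum over the ambiguity set and
the infimum in the CVaR definition can be interchanged. -/
theorem worst_case_cvar_minimax
    (n : ℕ) (m : Fin n → ℝ) (S : Matrix (Fin n) (Fin n) ℝ) (hS : S.PosSemidef)
    (α : ℝ) (hα : α ∈ Set.Ioo (0 : ℝ) 1)
    (Z : (Fin n → ℝ) → ℝ) (hZmeas : Measurable Z)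
    (hZint : ∀ μ ∈ momentSet n m S, Integrable Z μ) :
    (⨆ μ : momentSet n m S, ⨅ s : ℝ, (s + α⁻¹ * ∫ x, max (Z x - s) 0 ∂μ.1))
      = ⨅ s : ℝ, ⨆ μ : momentSet n m S,
          (s + α⁻¹ * ∫ x, max (Z x - s) 0 ∂μ.1) := by
  show (⨆ μ : momentSet n m S, ⨅ s : ℝ, cvf α Z μ.1 s)
      = ⨅ s : ℝ, ⨆ μ : momentSet n m S, cvf α Z μ.1 s
  have hα0 : 0 < α := hα.1
  have hai : 1 < α⁻¹ := one_lt_inv_iff₀.mpr ⟨hα.1, hα.2⟩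
  rcases (momentSet n m S).eq_empty_or_nonempty with hP | hne
  · haveI : IsEmpty ↥(momentSet n m S) := by
      rw [hP]; exact Set.instIsEmptyElemEmptyCollection _
    have h1 : (⨆ μ : momentSet n m S, ⨅ s : ℝ, cvf α Z μ.1 s) = 0 := by
      rw [iSup_of_empty']; exact Real.sSup_empty
    have h2 : ∀ s : ℝ, (⨆ μ : momentSet n m S, cvf α Z μ.1 s) = 0 := fun s => by
      rw [iSup_of_empty']; exact Real.sSup_empty
    rw [h1]
    simp only [h2, ciInf_const]
  · obtain ⟨μ0, hμ0⟩ := hne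
    haveI : Nonempty ↥(momentSet n m S) := ⟨⟨μ0, hμ0⟩⟩
    haveI := hμ0.1
    -- lower bounds on cvf
    have hglb : ∀ μ, μ ∈ momentSet n m S → ∀ s : ℝ, (∫ x, Z x ∂μ) ≤ cvf α Z μ s := by
      intro μ hμ s
      haveI := hμ.1
      have l1 := cvf_lb1 hα0 (Z := Z) (μ := μ) s
      have l2 := cvf_lb2 hα0 (hZint μ hμ) s
      rcases le_total s (∫ x, Z x ∂μ) with h | h
      · nlinarith [l2]
      · linarith
    have hinfbdd : ∀ μ, μ ∈ momentSet n m S →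
        BddBelow (Set.range fun s : ℝ => cvf α Z μ s) := by
      intro μ hμ
      exact ⟨∫ x, Z x ∂μ, by rintro y ⟨s, rfl⟩; exact hglb μ hμ s⟩
    have hinf_le : ∀ μ, μ ∈ momentSet n m S → ∀ s : ℝ,
        (⨅ s : ℝ, cvf α Z μ s) ≤ cvf α Z μ s := by
      intro μ hμ s
      exact ciInf_le (hinfbdd μ hμ) s
    -- boundedness transfer between different s values
    have htrans : ∀ s s' : ℝ,
        BddAbove (Set.range fun μ : momentSet n m S => cvf α Z μ.1 s) →
        BddAbove (Set.range fun μ : momentSet n m S => cvf α Z μ.1 s') := by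
      intro s s' ⟨M, hM⟩
      refine ⟨M + (1 + α⁻¹) * |s' - s|, ?_⟩
      rintro y ⟨μ, rfl⟩
      haveI := μ.2.1
      have hl := cvf_lip hα0 (hZint μ.1 μ.2) s' s
      have hM' : cvf α Z μ.1 s ≤ M := hM ⟨μ, rfl⟩
      have := abs_le.mp hl
      linarith [this.1, this.2]
    by_cases hB : BddAbove (Set.range fun μ : momentSet n m S => cvf α Z μ.1 0)
    · -- bounded case
      have hBs : ∀ s : ℝ, BddAbove (Set.range fun μ : momentSet n m S => cvf α Z μ.1 s) :=
        fun s => htrans 0 s hB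
      have hgA : BddAbove (Set.range fun μ : momentSet n m S => ⨅ s : ℝ, cvf α Z μ.1 s) := by
        obtain ⟨M, hM⟩ := hBs 0
        refine ⟨M, ?_⟩
        rintro y ⟨μ, rfl⟩
        exact (hinf_le μ.1 μ.2 0).trans (hM ⟨μ, rfl⟩)
      have hRbdd : BddBelow (Set.range fun s : ℝ =>
          ⨆ μ : momentSet n m S, cvf α Z μ.1 s) := by
        refine ⟨∫ x, Z x ∂μ0, ?_⟩
        rintro y ⟨s, rfl⟩
        exact (hglb μ0 hμ0 s).trans (le_ciSup (hBs s) ⟨μ0, hμ0⟩)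
      apply le_antisymm
      · apply le_ciInf
        intro s
        apply ciSup_le
        intro μ
        exact (hinf_le μ.1 μ.2 s).trans (le_ciSup (hBs s) μ)
      · by_contra hlt
        push_neg at hlt
        set LHS := ⨆ μ : momentSet n m S, ⨅ s : ℝ, cvf α Z μ.1 s with hLHS
        set RHS := ⨅ s : ℝ, ⨆ μ : momentSet n m S, cvf α Z μ.1 s with hRHS
        set θ := (LHS + RHS)/2 with hθ
        have hall : ∀ μ ∈ momentSet n m S, ∃ s, cvf α Z μ s < θ := by
          intro μ hμ
          by_contra h
          push_neg at h
          have h1 : θ ≤ ⨅ s : ℝ, cvf α Z μ s := le_ciInf h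
          have h2 : (⨅ s : ℝ, cvf α Z μ s) ≤ LHS := le_ciSup hgA ⟨μ, hμ⟩
          have : LHS < θ := by rw [hθ]; linarith
          linarith
        obtain ⟨sstar, hsstar⟩ := core hα hZint hall ⟨μ0, hμ0⟩
        have h1 : RHS ≤ ⨆ μ : momentSet n m S, cvf α Z μ.1 sstar := ciInf_le hRbdd sstar
        have h2 : (⨆ μ : momentSet n m S, cvf α Z μ.1 sstar) ≤ θ :=
          ciSup_le fun μ => hsstar μ.1 μ.2
        have : θ < RHS := by rw [hθ]; linarith
        linarith
    · -- unbounded case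
      have hnBs : ∀ s : ℝ, ¬BddAbove (Set.range fun μ : momentSet n m S => cvf α Z μ.1 s) :=
        fun s hb => hB (htrans s 0 hb)
      have h2 : ∀ s : ℝ, (⨆ μ : momentSet n m S, cvf α Z μ.1 s) = 0 := fun s =>
        Real.iSup_of_not_bddAbove (hnBs s)
      have hL : ¬BddAbove (Set.range fun μ : momentSet n m S => ⨅ s : ℝ, cvf α Z μ.1 s) := by
        rintro ⟨M, hM⟩
        have hall : ∀ μ ∈ momentSet n m S, ∃ s, cvf α Z μ s < M + 1 := by
          intro μ hμ
          have h1 : (⨅ s : ℝ, cvf α Z μ s) ≤ M := hM ⟨⟨μ, hμ⟩, rfl⟩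
          exact exists_lt_of_ciInf_lt (lt_of_le_of_lt h1 (lt_add_one M))
        obtain ⟨sstar, hsstar⟩ := core hα hZint hall ⟨μ0, hμ0⟩
        apply hnBs sstar
        refine ⟨M + 1, ?_⟩
        rintro y ⟨μ, rfl⟩
        exact hsstar μ.1 μ.2
      rw [Real.iSup_of_not_bddAbove hL]
      simp only [h2, ciInf_const]
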